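/- Every real central hyperplane arrangement of rank r admits a supersolvable extension of the same rank, i.e., there exists a supersolvable arrangement of rank r containing it. -/

import Mathlib

open Matrix
open scoped Classical

/-- Ambient space: `ℝⁿ`. -/
abbrev V (n : ℕ) := Fin n → ℝ

/-- The linear functional `x ↦ v ⬝ᵥ x` determined by a normal vector. -/
def hypl {n : ℕ} (v : V n) : V n →ₗ[ℝ] ℝ where
  toFun x := v ⬝ᵥ x
  map_add' x y := by simp [dotProduct_add]
  map_smul' c x := by simp [dotProduct_smul]

/-- Two normal vectors define the same hyperplane. -/
def SameHyp {n : ℕ} (u w : V n) : Prop := ∀ x, u ⬝ᵥ x = 0 ↔ w ⬝ᵥ x = 0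

/-- A finite set of normal vectors represents a (central) hyperplane arrangement
if each normal is nonzero and distinct normals define distinct hyperplanes. -/
def IsArrangement {n : ℕ} (A : Finset (V n)) : Prop :=
  (∀ v ∈ A, v ≠ 0) ∧ ∀ u ∈ A, ∀ w ∈ A, SameHyp u w → u = w

/-- The point `x` realizes the sign vector `c` on the arrangement `A`. -/
def Realizes {n : ℕ} (A : Finset (V n)) (c : V n → Bool) (x : V n) : Prop :=
  ∀ v ∈ A, if c v then 0 < v ⬝ᵥ x else v ⬝ᵥ x < 0

/-- A chamber of `A`, encoded by its sign vector. -/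
def IsChamber {n : ℕ} (A : Finset (V n)) (c : V n → Bool) : Prop :=
  ∃ x, Realizes A c x

/-- The separation set of two chambers: hyperplanes on which their signs differ. -/
noncomputable def SepSet {n : ℕ} (A : Finset (V n)) (c d : V n → Bool) : Finset (V n) :=
  A.filter (fun v => c v ≠ d v)

/-- The localization of `A` at the subspace `ker u ∩ ker w`:
hyperplanes containing this subspace. -/
noncomputable def loc {n : ℕ} (A : Finset (V n)) (u w : V n) : Finset (V n) :=
  A.filter (fun v => ∀ x, u ⬝ᵥ x = 0 → w ⬝ᵥ x = 0 → v ⬝ᵥ x = 0)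

/-- `u, w` span a codimension-2 intersection subspace `ker u ∩ ker w` of `A`. -/
def Codim2 {n : ℕ} (A : Finset (V n)) (u w : V n) : Prop :=
  u ∈ A ∧ w ∈ A ∧ LinearIndependent ℝ ![u, w]

/-- `I` is biclosed w.r.t. the chamber `c₀`: its intersection with each rank-2
localization is the separation set of some chamber of the localization. -/
def IsBiclosed {n : ℕ} (A : Finset (V n)) (c₀ : V n → Bool) (I : Finset (V n)) : Prop :=
  ∀ u w, Codim2 A u w →
    ∃ d, IsChamber (loc A u w) d ∧ I ∩ loc A u w = SepSet (loc A u w) c₀ d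

/-- `I ⊆ A` is convex with respect to `c₀`. -/
def IsConvex {n : ℕ} (A : Finset (V n)) (c₀ : V n → Bool) (I : Finset (V n)) : Prop :=
  ∀ H ∈ A \ I, ∃ e, IsChamber A e ∧ H ∈ SepSet A c₀ e ∧ SepSet A c₀ e ⊆ A \ I

/-- `I` is 2-closed: its intersection with each rank-2 localization is convex there. -/
def Is2Closed {n : ℕ} (A : Finset (V n)) (c₀ : V n → Bool) (I : Finset (V n)) : Prop :=
  ∀ u w, Codim2 A u w → IsConvex (loc A u w) c₀ (I ∩ loc A u w)

/-- `v` is a wall of the chamber `c`: some point of the closure of `c` lies on the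
hyperplane of `v` and strictly off every other hyperplane of `A`. -/
def IsWall {n : ℕ} (A : Finset (V n)) (c : V n → Bool) (v : V n) : Prop :=
  v ∈ A ∧ ∃ x, v ⬝ᵥ x = 0 ∧ ∀ w ∈ A, ¬ SameHyp v w →
    (if c w then 0 < w ⬝ᵥ x else w ⬝ᵥ x < 0)

/-- The sign vector `v` is feasible: some point satisfies all its strict constraints. -/
def Feasible {n : ℕ} (A : Finset (V n)) (v : V n → SignType) : Prop :=
  ∃ x : V n, ∀ h ∈ A, (v h = 1 → 0 < h ⬝ᵥ x) ∧ (v h = -1 → h ⬝ᵥ x < 0)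

/-- A circuit of `A`: a minimal nonzero infeasible sign vector supported on `A`. -/
def IsCircuit {n : ℕ} (A : Finset (V n)) (v : V n → SignType) : Prop :=
  (∀ h, v h ≠ 0 → h ∈ A) ∧ (∃ h, v h ≠ 0) ∧ ¬ Feasible A v ∧
    ∀ w : V n → SignType, (∀ h, w h ≠ 0 → w h = v h) →
      {h | w h ≠ 0} ⊂ {h | v h ≠ 0} → Feasible A w

/-- A reduced gallery from `c₀` to `-c₀` in `A`, crossing hyperplanes `H 0, H 1, …`
in order. -/
def IsGallery {n N : ℕ} (A : Finset (V n)) (c₀ : V n → Bool) (H : Fin N → V n)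
    (d : Fin (N + 1) → V n → Bool) : Prop :=
  (∀ i, IsChamber A (d i)) ∧ d 0 = c₀ ∧ (∀ v ∈ A, d (Fin.last N) v = !c₀ v) ∧
    ∀ i : Fin N, SepSet A (d i.castSucc) (d i.succ) = {H i}

/-- The enumeration `H` of `A` is admissible: on every rank-2 localization, the
induced order is the crossing order of some reduced gallery of the localization. -/
def Admissible {n N : ℕ} (A : Finset (V n)) (c₀ : V n → Bool) (H : Fin N → V n) : Prop :=
  ∀ u w, Codim2 A u w →
    ∃ (M : ℕ) (G : Fin M → V n) (e : Fin (M + 1) → V n → Bool) (φ : Fin M → Fin N),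
      IsGallery (loc A u w) c₀ G e ∧ StrictMono φ ∧ ∀ k, G k = H (φ k)

/-- The intersection lattice of `A`, as a set of subspaces of `ℝⁿ`. -/
def InterLattice {n : ℕ} (A : Finset (V n)) : Set (Submodule ℝ (V n)) :=
  {X | ∃ S : Finset (V n), S ⊆ A ∧ X = S.inf (fun v => LinearMap.ker (hypl v))}

/-- A modular element of the intersection lattice of `A`. -/
def IsModular {n : ℕ} (A : Finset (V n)) (X : Submodule ℝ (V n)) : Prop :=
  X ∈ InterLattice A ∧ ∀ Y ∈ InterLattice A, X ⊔ Y ∈ InterLattice A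

/-- The rank of the arrangement `A`. -/
noncomputable def rankA {n : ℕ} (A : Finset (V n)) : ℕ :=
  Module.finrank ℝ (Submodule.span ℝ (A : Set (V n)))

/-- A modular flag: a maximal chain `⊤ = X 0 > X 1 > ⋯ > X r` of modular
elements of the intersection lattice, with `X i` of codimension `i`. -/
def IsModularFlag {n : ℕ} (A : Finset (V n)) (X : Fin (rankA A + 1) → Submodule ℝ (V n)) : Prop :=
  X 0 = ⊤ ∧ (∀ i, IsModular A (X i)) ∧ (∀ i j, i ≤ j → X j ≤ X i) ∧
    ∀ i : Fin (rankA A + 1), Module.finrank ℝ (X i) = n - (i : ℕ)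

/-- `A` is supersolvable: its intersection lattice has a modular flag. -/
def IsSupersolvable {n : ℕ} (A : Finset (V n)) : Prop :=
  ∃ X : Fin (rankA A + 1) → Submodule ℝ (V n), IsModularFlag A X

/-- The chamber `c` is incident to the subspace `X`:  some point of `X` lies in the
closure of `c` and strictly off every hyperplane of `A` not containing `X`. -/
def IncidentSub {n : ℕ} (A : Finset (V n)) (c : V n → Bool) (X : Submodule ℝ (V n)) : Prop :=
  ∃ x, x ∈ X ∧ ∀ v ∈ A, ¬ X ≤ LinearMap.ker (hypl v) →
    (if c v then 0 < v ⬝ᵥ x else v ⬝ᵥ x < 0)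

/-- The chamber `c` is incident to the codimension-2 subspace `ker u ∩ ker w`. -/
def IncidentLoc {n : ℕ} (A : Finset (V n)) (c : V n → Bool) (u w : V n) : Prop :=
  ∃ x, (∀ v ∈ loc A u w, v ⬝ᵥ x = 0) ∧ ∀ v ∈ A, v ∉ loc A u w →
    (if c v then 0 < v ⬝ᵥ x else v ⬝ᵥ x < 0)

/-- `(A, c₀)` is bineighborly: any chamber is incident to the intersection of any two
of its walls separating it from `-c₀`. -/
def Bineighborly {n : ℕ} (A : Finset (V n)) (c₀ : V n → Bool) : Prop :=
  ∀ c, IsChamber A c → ∀ u w, IsWall A c u → IsWall A c w →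
    u ∈ SepSet A c (fun v => !c₀ v) → w ∈ SepSet A c (fun v => !c₀ v) → IncidentLoc A c u w

/-- Every chamber of `A` is a simplicial cone: its walls are linearly independent
and span the same subspace as `A`. -/
def IsSimplicial {n : ℕ} (A : Finset (V n)) : Prop :=
  ∀ c, IsChamber A c →
    LinearIndependent ℝ ((↑) : {v // IsWall A c v} → V n) ∧
      Submodule.span ℝ {v | IsWall A c v} = Submodule.span ℝ (A : Set (V n))

section Aux
open Submodule Module

variable {n : ℕ}

/-! ### Duality layer -/

noncomputable def eE (n : ℕ) : EuclideanSpace ℝ (Fin n) ≃ₗ[ℝ] V n :=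
  WithLp.linearEquiv 2 ℝ (Fin n → ℝ)

lemma dot_inner (u x : V n) : u ⬝ᵥ x = inner ℝ ((eE n).symm u) ((eE n).symm x) := by
  simp [eE, PiLp.inner_apply, dotProduct, WithLp.linearEquiv, mul_comm]

noncomputable def KK {n : ℕ} (U : Submodule ℝ (V n)) : Submodule ℝ (V n) :=
  Submodule.map ((eE n : EuclideanSpace ℝ (Fin n) →ₗ[ℝ] V n))
    ((Submodule.comap ((eE n : EuclideanSpace ℝ (Fin n) →ₗ[ℝ] V n)) U)ᗮ)

lemma mem_KK (U : Submodule ℝ (V n)) (x : V n) : x ∈ KK U ↔ ∀ u ∈ U, u ⬝ᵥ x = 0 := by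
  constructor
  · rintro ⟨z, hz, rfl⟩ u hu
    rw [show ((eE n : EuclideanSpace ℝ (Fin n) →ₗ[ℝ] V n) z) = (eE n) z from rfl, dot_inner]
    simp only [LinearEquiv.symm_apply_apply]
    exact hz ((eE n).symm u) (by simpa using hu)
  · intro h
    refine ⟨(eE n).symm x, ?_, by simp⟩
    intro z hz
    have := h ((eE n) z) (by simpa using hz)
    rw [dot_inner] at this
    simpa using this

lemma finrank_KK (U : Submodule ℝ (V n)) :
    Module.finrank ℝ (KK U) = n - Module.finrank ℝ U := by
  have e1 : Module.finrank ℝ (KK U) =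
      Module.finrank ℝ ((Submodule.comap ((eE n : EuclideanSpace ℝ (Fin n) →ₗ[ℝ] V n)) U)ᗮ) :=
    (LinearEquiv.finrank_map_eq (eE n) _).symm ▸ rfl
  have e2 := Submodule.finrank_add_finrank_orthogonal
    (𝕜 := ℝ) (Submodule.comap ((eE n : EuclideanSpace ℝ (Fin n) →ₗ[ℝ] V n)) U)
  have e3 : Module.finrank ℝ (Submodule.comap ((eE n : EuclideanSpace ℝ (Fin n) →ₗ[ℝ] V n)) U)
      = Module.finrank ℝ U := by
    rw [show Submodule.comap ((eE n : EuclideanSpace ℝ (Fin n) →ₗ[ℝ] V n)) U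
        = Submodule.map ((eE n).symm : V n →ₗ[ℝ] EuclideanSpace ℝ (Fin n)) U by
      ext z
      constructor
      · intro hz; exact ⟨(eE n) z, hz, by simp⟩
      · rintro ⟨y, hy, rfl⟩; simpa using hy]
    exact LinearEquiv.finrank_map_eq (eE n).symm U
  have e4 : Module.finrank ℝ (EuclideanSpace ℝ (Fin n)) = n := by simp
  rw [e4] at e2; rw [e1, ← e3]
  omega

lemma KK_antitone {U U' : Submodule ℝ (V n)} (h : U ≤ U') : KK U' ≤ KK U := by
  intro x hx
  rw [mem_KK] at hx ⊢
  exact fun u hu => hx u (h hu)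

lemma KK_inf_eq (U U' : Submodule ℝ (V n)) : KK U ⊓ KK U' = KK (U ⊔ U') := by
  ext x
  simp only [Submodule.mem_inf, mem_KK]
  constructor
  · rintro ⟨h1, h2⟩ u hu
    rcases Submodule.mem_sup.1 hu with ⟨a, ha, b, hb, rfl⟩
    rw [add_dotProduct, h1 a ha, h2 b hb, add_zero]
  · intro h
    exact ⟨fun u hu => h u (le_sup_left (a := U) (b := U') hu),
           fun u hu => h u (le_sup_right (a := U) (b := U') hu)⟩

lemma KK_sup (U U' : Submodule ℝ (V n)) : KK U ⊔ KK U' = KK (U ⊓ U') := by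
  have le1 : KK U ⊔ KK U' ≤ KK (U ⊓ U') :=
    sup_le (KK_antitone inf_le_left) (KK_antitone inf_le_right)
  refine Submodule.eq_of_le_of_finrank_le le1 ?_
  have h1 := Submodule.finrank_sup_add_finrank_inf_eq (KK U) (KK U')
  have h2 := Submodule.finrank_sup_add_finrank_inf_eq U U'
  rw [KK_inf_eq, finrank_KK, finrank_KK, finrank_KK] at h1
  have ha := Submodule.finrank_le U
  have hb := Submodule.finrank_le U'
  have hs := Submodule.finrank_le (U ⊔ U')
  have hi : Module.finrank ℝ (U ⊓ U' : Submodule ℝ (V n)) ≤ Module.finrank ℝ U :=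
    Submodule.finrank_mono inf_le_left
  rw [finrank_KK]
  simp only [Module.finrank_pi, Fintype.card_fin] at ha hb hs
  omega

lemma KK_bot : KK (⊥ : Submodule ℝ (V n)) = ⊤ := by
  rw [eq_top_iff]
  intro x _
  rw [mem_KK]
  rintro u hu
  rw [Submodule.mem_bot] at hu
  subst hu
  exact zero_dotProduct x

lemma inf_ker_KK (S : Finset (V n)) :
    S.inf (fun v => LinearMap.ker (hypl v)) = KK (span ℝ (S : Set (V n))) := by
  ext x
  rw [Submodule.mem_finsetInf, mem_KK]
  constructor
  · intro h u hu
    induction hu using Submodule.span_induction with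
    | mem v hv => exact h v (by exact_mod_cast hv)
    | zero => exact zero_dotProduct x
    | add a b _ _ ha hb => rw [add_dotProduct, ha, hb, add_zero]
    | smul c a _ ha => rw [smul_dotProduct, ha, smul_zero]
  · intro h v hv
    exact h v (Submodule.subset_span (by exact_mod_cast hv))

end Aux

section Aux2
open Submodule Module

variable {n : ℕ}

lemma sameHyp_refl (v : V n) : SameHyp v v := fun _ => Iff.rfl
lemma sameHyp_symm {v w : V n} (h : SameHyp v w) : SameHyp w v := fun x => (h x).symm
lemma sameHyp_trans {u v w : V n} (h : SameHyp u v) (h' : SameHyp v w) : SameHyp u w :=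
  fun x => (h x).trans (h' x)

lemma sameHyp_smul {v : V n} {c : ℝ} (hc : c ≠ 0) : SameHyp v (c • v) := by
  intro x
  rw [smul_dotProduct, smul_eq_mul, mul_eq_zero]
  constructor
  · intro h; exact Or.inr h
  · rintro (h | h)
    · exact absurd h hc
    · exact h

lemma dot_self_ne {v : V n} (hv : v ≠ 0) : v ⬝ᵥ v ≠ 0 := by
  intro h
  apply hv
  have : ∀ i, v i = 0 := by
    intro i
    have hnn : ∀ j, 0 ≤ v j * v j := fun j => mul_self_nonneg _
    have := (Finset.sum_eq_zero_iff_of_nonneg (fun j _ => hnn j)).1 h i (Finset.mem_univ i)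
    exact mul_self_eq_zero.1 this
  funext i; exact this i

lemma sameHyp_exists {v w : V n} (hv : v ≠ 0) (h : SameHyp v w) :
    ∃ c : ℝ, c ≠ 0 ∧ w = c • v := by
  set x₀ : V n := (v ⬝ᵥ v)⁻¹ • v with hx₀
  have hvx₀ : v ⬝ᵥ x₀ = 1 := by
    rw [hx₀, dotProduct_smul, smul_eq_mul, inv_mul_cancel₀ (dot_self_ne hv)]
  set c : ℝ := w ⬝ᵥ x₀ with hc
  have key : ∀ x, w ⬝ᵥ x = c * (v ⬝ᵥ x) := by
    intro x
    have hy : v ⬝ᵥ (x - (v ⬝ᵥ x) • x₀) = 0 := by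
      rw [dotProduct_sub, dotProduct_smul, hvx₀, smul_eq_mul, mul_one, sub_self]
    have hwy : w ⬝ᵥ (x - (v ⬝ᵥ x) • x₀) = 0 := (h _).1 hy
    rw [dotProduct_sub, dotProduct_smul, sub_eq_zero] at hwy
    rw [hwy, smul_eq_mul, mul_comm]
  have hweq : w = c • v := by
    funext i
    have := key (Pi.single i 1)
    rw [dotProduct_single, dotProduct_single, mul_one, mul_one] at this
    simpa using this
  refine ⟨c, ?_, hweq⟩
  intro hc0
  have : w ⬝ᵥ v = 0 := by rw [key v, hc0, zero_mul]
  exact dot_self_ne hv ((h v).2 ((sameHyp_symm h v).2 ((h v).2 (by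
    rw [key v, hc0, zero_mul]))))

noncomputable def canonL {n : ℕ} (L : Submodule ℝ (V n)) : V n :=
  if h : ∃ u : V n, u ≠ 0 ∧ Submodule.span ℝ {u} = L then h.choose else 0

noncomputable def rep {n : ℕ} (A : Finset (V n)) (v : V n) : V n :=
  if h : ∃ a ∈ A, SameHyp v a then h.choose else canonL (Submodule.span ℝ {v})

lemma span_singleton_smul {v : V n} {c : ℝ} (hc : c ≠ 0) :
    Submodule.span ℝ {c • v} = Submodule.span ℝ {v} := by
  apply le_antisymm
  · rw [Submodule.span_le, Set.singleton_subset_iff]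
    exact Submodule.smul_mem _ c (Submodule.mem_span_singleton_self v)
  · rw [Submodule.span_le, Set.singleton_subset_iff]
    rw [SetLike.mem_coe, Submodule.mem_span_singleton]
    exact ⟨c⁻¹, by rw [smul_smul, inv_mul_cancel₀ hc, one_smul]⟩

lemma rep_smul (A : Finset (V n)) {v : V n} (hv : v ≠ 0) :
    ∃ c : ℝ, c ≠ 0 ∧ rep A v = c • v := by
  rw [rep]
  split_ifs with h
  · obtain ⟨ha, hsh⟩ := h.choose_spec
    exact sameHyp_exists hv hsh
  · rw [canonL]
    have h' : ∃ u : V n, u ≠ 0 ∧ Submodule.span ℝ {u} = Submodule.span ℝ {v} := ⟨v, hv, rfl⟩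
    rw [dif_pos h']
    obtain ⟨hu0, hsp⟩ := h'.choose_spec
    have : h'.choose ∈ Submodule.span ℝ {v} :=
      hsp.le (Submodule.mem_span_singleton_self _)
    rw [Submodule.mem_span_singleton] at this
    obtain ⟨c, hc⟩ := this
    refine ⟨c, ?_, hc.symm⟩
    rintro rfl
    rw [zero_smul] at hc
    exact hu0 hc.symm

lemma sameHyp_rep (A : Finset (V n)) {v : V n} (hv : v ≠ 0) : SameHyp v (rep A v) := by
  obtain ⟨c, hc, heq⟩ := rep_smul A hv
  rw [heq]
  exact sameHyp_smul hc

lemma rep_mem_A {A : Finset (V n)} (hA : IsArrangement A) {a : V n} (ha : a ∈ A) :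
    rep A a = a := by
  rw [rep, dif_pos ⟨a, ha, sameHyp_refl a⟩]
  obtain ⟨ha', hsh⟩ := (⟨a, ha, sameHyp_refl a⟩ : ∃ b ∈ A, SameHyp a b).choose_spec
  exact (hA.2 a ha _ ha' hsh).symm

lemma rep_eq_of_sameHyp {A : Finset (V n)} (hA : IsArrangement A) {v w : V n}
    (hv : v ≠ 0) (h : SameHyp v w) : rep A v = rep A w := by
  have hiff : (∃ a ∈ A, SameHyp v a) ↔ (∃ a ∈ A, SameHyp w a) := by
    constructor
    · rintro ⟨a, ha, hsh⟩; exact ⟨a, ha, sameHyp_trans (sameHyp_symm h) hsh⟩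
    · rintro ⟨a, ha, hsh⟩; exact ⟨a, ha, sameHyp_trans h hsh⟩
  rw [rep, rep]
  split_ifs with h1 h2 h2
  · obtain ⟨ha1, hs1⟩ := h1.choose_spec
    obtain ⟨ha2, hs2⟩ := h2.choose_spec
    exact hA.2 _ ha1 _ ha2 (sameHyp_trans (sameHyp_symm hs1) (sameHyp_trans h hs2))
  · exact absurd (hiff.1 h1) h2
  · exact absurd (hiff.2 h2) h1
  · obtain ⟨c, hc, rfl⟩ := sameHyp_exists hv h
    rw [span_singleton_smul hc]

end Aux2

section Aux3
open Submodule Module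

variable {n : ℕ}

lemma span_pair_eq_sup (v w : V n) :
    Submodule.span ℝ {v, w} = Submodule.span ℝ {v} ⊔ Submodule.span ℝ {w} := by
  rw [show ({v, w} : Set (V n)) = insert v {w} from rfl, Submodule.span_insert]

lemma span_pair_smul {v w v' w' : V n} {c d : ℝ} (hc : c ≠ 0) (hd : d ≠ 0)
    (hv : v' = c • v) (hw : w' = d • w) :
    Submodule.span ℝ {v', w'} = Submodule.span ℝ ({v, w} : Set (V n)) := by
  rw [span_pair_eq_sup, span_pair_eq_sup, hv, hw, span_singleton_smul hc, span_singleton_smul hd]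

lemma finrank_span_pair {v w : V n} (hv : v ≠ 0) (hw : w ∉ Submodule.span ℝ {v}) :
    Module.finrank ℝ (Submodule.span ℝ ({v, w} : Set (V n))) = 2 := by
  have hind : LinearIndependent ℝ ![v, w] := by
    rw [LinearIndependent.pair_iff' hv]
    intro a ha
    exact hw (ha ▸ Submodule.smul_mem _ a (Submodule.mem_span_singleton_self v))
  have hr : Set.range ![v, w] = {v, w} := by
    ext x
    simp [Matrix.range_cons, Matrix.range_empty]
    tauto
  rw [← hr, finrank_span_eq_card hind]
  simp

lemma span_pair_le {P : Submodule ℝ (V n)} {v w : V n} (hv : v ∈ P) (hw : w ∈ P) :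
    Submodule.span ℝ ({v, w} : Set (V n)) ≤ P := by
  rw [Submodule.span_le]
  rintro x hx
  rcases hx with h | h
  · subst h; exact hv
  · rw [Set.mem_singleton_iff] at h; subst h; exact hw

lemma span_pair_inter_ne_bot {Tl Th : Submodule ℝ (V n)} (hle : Tl ≤ Th)
    (hfr : Module.finrank ℝ Th ≤ Module.finrank ℝ Tl + 1)
    {v w : V n} (hv : v ∈ Th) (hw : w ∈ Th) (hv0 : v ≠ 0)
    (hwv : w ∉ Submodule.span ℝ {v}) :
    ∃ u : V n, u ≠ 0 ∧ u ∈ Submodule.span ℝ ({v, w} : Set (V n)) ⊓ Tl := by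
  set P := Submodule.span ℝ ({v, w} : Set (V n))
  have hsup : P ⊔ Tl ≤ Th := sup_le (span_pair_le hv hw) hle
  have h1 := Submodule.finrank_sup_add_finrank_inf_eq P Tl
  have h2 : Module.finrank ℝ (P ⊔ Tl : Submodule ℝ (V n)) ≤ Module.finrank ℝ Th :=
    Submodule.finrank_mono hsup
  have h3 : Module.finrank ℝ P = 2 := finrank_span_pair hv0 hwv
  have hpos : 0 < Module.finrank ℝ (P ⊓ Tl : Submodule ℝ (V n)) := by omega
  have hne : (P ⊓ Tl : Submodule ℝ (V n)) ≠ ⊥ := by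
    intro hbot
    rw [hbot] at hpos
    simp at hpos
  obtain ⟨u, hu, hu0⟩ := Submodule.exists_mem_ne_zero_of_ne_bot hne
  exact ⟨u, hu0, hu⟩

lemma coatom_step (B : Finset (V n)) (hB0 : ∀ v ∈ B, v ≠ 0)
    (Tl Th : Submodule ℝ (V n))
    (hpair : ∀ v ∈ B, ∀ w ∈ B, v ∈ Th → v ∉ Tl → w ∈ Th → w ∉ Tl →
      w ∉ Submodule.span ℝ {v} →
      ∃ u ∈ B, u ∈ Submodule.span ℝ ({v, w} : Set (V n)) ⊓ Tl) :
    ∀ N : ℕ, ∀ S : Finset (V n), S ⊆ B → (∀ s ∈ S, s ∈ Th) →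
      (S.filter (fun s => s ∉ Tl)).card ≤ N →
      ∃ S' : Finset (V n), S' ⊆ B ∧
        Submodule.span ℝ (S' : Set (V n)) = Tl ⊓ Submodule.span ℝ (S : Set (V n)) := by
  have base : ∀ S : Finset (V n), S ⊆ B → S.filter (fun s => s ∉ Tl) = ∅ →
      ∃ S' : Finset (V n), S' ⊆ B ∧
        Submodule.span ℝ (S' : Set (V n)) = Tl ⊓ Submodule.span ℝ (S : Set (V n)) := by
    intro S hSB hf
    refine ⟨S, hSB, ?_⟩
    rw [Finset.filter_eq_empty_iff] at hf
    have hle : Submodule.span ℝ (S : Set (V n)) ≤ Tl := by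
      rw [Submodule.span_le]
      intro s hs
      have := hf (show s ∈ S by exact_mod_cast hs)
      simpa using this
    exact (inf_eq_right.2 hle).symm
  intro N
  induction N with
  | zero =>
    intro S hSB _ hcard
    exact base S hSB (Finset.card_eq_zero.1 (Nat.le_zero.1 hcard))
  | succ N IH =>
    intro S hSB hSTh hcard
    by_cases hout : S.filter (fun s => s ∉ Tl) = ∅
    · exact base S hSB hout
    · obtain ⟨v, hvf⟩ := Finset.nonempty_of_ne_empty hout
      have hvS : v ∈ S := (Finset.mem_filter.1 hvf).1
      have hvTl : v ∉ Tl := by simpa using (Finset.mem_filter.1 hvf).2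
      by_cases hpar : ∃ w ∈ S.filter (fun s => s ∉ Tl), w ≠ v ∧ w ∈ Submodule.span ℝ {v}
      · obtain ⟨w, hwf, hwv, hwsp⟩ := hpar
        have hwS : w ∈ S := (Finset.mem_filter.1 hwf).1
        have hspan : Submodule.span ℝ ((S.erase w : Finset (V n)) : Set (V n))
            = Submodule.span ℝ (S : Set (V n)) := by
          apply le_antisymm
          · exact Submodule.span_mono (by exact_mod_cast Finset.erase_subset w S)
          · rw [Submodule.span_le]
            intro s hs
            rcases eq_or_ne s w with h | hsw
            · rw [h]
              refine Submodule.span_mono (Set.singleton_subset_iff.2 ?_) hwsp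
              exact_mod_cast Finset.mem_erase.2 ⟨Ne.symm hwv, hvS⟩
            · exact Submodule.subset_span
                (by exact_mod_cast Finset.mem_erase.2 ⟨hsw, by exact_mod_cast hs⟩)
        obtain ⟨S', hS'B, hS'⟩ := IH (S.erase w) ((Finset.erase_subset w S).trans hSB)
          (fun s hs => hSTh s (Finset.mem_erase.1 hs).2) (by
            rw [Finset.filter_erase, Finset.card_erase_of_mem hwf]
            omega)
        exact ⟨S', hS'B, by rw [hS', hspan]⟩
      · by_cases hw2 : ∃ w ∈ S.filter (fun s => s ∉ Tl), w ≠ v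
        · obtain ⟨w, hwf, hwv⟩ := hw2
          have hwS : w ∈ S := (Finset.mem_filter.1 hwf).1
          have hwTl : w ∉ Tl := by simpa using (Finset.mem_filter.1 hwf).2
          have hwsp : w ∉ Submodule.span ℝ {v} := fun hc => hpar ⟨w, hwf, hwv, hc⟩
          obtain ⟨u, huB, husp⟩ := hpair v (hSB hvS) w (hSB hwS) (hSTh v hvS) hvTl
            (hSTh w hwS) hwTl hwsp
          obtain ⟨huP, huTl⟩ := Submodule.mem_inf.1 husp
          have hu0 : u ≠ 0 := hB0 u huB
          obtain ⟨a, b, hab⟩ := Submodule.mem_span_pair.1 huP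
          have ha0 : a ≠ 0 := by
            rintro rfl
            rw [zero_smul, zero_add] at hab
            have hb0 : b ≠ 0 := by rintro rfl; rw [zero_smul] at hab; exact hu0 hab.symm
            refine hwTl ?_
            have hwu : w = b⁻¹ • u := by rw [← hab, smul_smul, inv_mul_cancel₀ hb0, one_smul]
            rw [hwu]
            exact Submodule.smul_mem _ _ huTl
          set S₂ := insert u (S.erase v) with hS₂
          have hS₂B : S₂ ⊆ B := by
            intro s hs
            rcases Finset.mem_insert.1 hs with h | hs
            · rw [h]; exact huB
            · exact hSB (Finset.mem_erase.1 hs).2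
          have hS₂Th : ∀ s ∈ S₂, s ∈ Th := by
            intro s hs
            rcases Finset.mem_insert.1 hs with h | hs
            · rw [h]; exact span_pair_le (hSTh v hvS) (hSTh w hwS) huP
            · exact hSTh s (Finset.mem_erase.1 hs).2
          have hspan : Submodule.span ℝ (S₂ : Set (V n)) = Submodule.span ℝ (S : Set (V n)) := by
            apply le_antisymm
            · rw [Submodule.span_le]
              intro s hs
              rcases Finset.mem_insert.1 (show s ∈ S₂ from by exact_mod_cast hs) with h | hs'
              · rw [h]
                refine span_pair_le ?_ ?_ huP
                · exact Submodule.subset_span (by exact_mod_cast hvS)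
                · exact Submodule.subset_span (by exact_mod_cast hwS)
              · exact Submodule.subset_span (by exact_mod_cast (Finset.mem_erase.1 hs').2)
            · rw [Submodule.span_le]
              intro s hs
              rcases eq_or_ne s v with h | hsv
              · rw [h]
                have hv_eq : v = a⁻¹ • u - (a⁻¹ * b) • w := by
                  rw [← hab, smul_add, smul_smul, smul_smul, inv_mul_cancel₀ ha0, one_smul]
                  abel
                rw [hv_eq]
                have hu_mem : u ∈ Submodule.span ℝ (S₂ : Set (V n)) :=
                  Submodule.subset_span (by exact_mod_cast Finset.mem_insert_self u _)
                have hw_mem : w ∈ Submodule.span ℝ (S₂ : Set (V n)) := by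
                  have hw2' : w ∈ S₂ := Finset.mem_insert_of_mem (Finset.mem_erase.2 ⟨hwv, hwS⟩)
                  exact Submodule.subset_span (by exact_mod_cast hw2')
                exact Submodule.sub_mem _ (Submodule.smul_mem _ _ hu_mem)
                  (Submodule.smul_mem _ _ hw_mem)
              · have hsS : s ∈ S := by exact_mod_cast hs
                have hs2 : s ∈ S₂ := Finset.mem_insert_of_mem (Finset.mem_erase.2 ⟨hsv, hsS⟩)
                exact Submodule.subset_span (by exact_mod_cast hs2)
          obtain ⟨S', hS'B, hS'⟩ := IH S₂ hS₂B hS₂Th (by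
            rw [hS₂, Finset.filter_insert, if_neg (by simpa using huTl),
              Finset.filter_erase, Finset.card_erase_of_mem hvf]
            omega)
          exact ⟨S', hS'B, by rw [hS', hspan]⟩
        · push_neg at hw2
          refine ⟨S.erase v, (Finset.erase_subset v S).trans hSB, ?_⟩
          have herTl : ∀ s ∈ S.erase v, s ∈ Tl := by
            intro s hs
            obtain ⟨hsv, hsS⟩ := Finset.mem_erase.1 hs
            by_contra hsTl
            exact hsv (hw2 s (Finset.mem_filter.2 ⟨hsS, by simpa using hsTl⟩))
          apply le_antisymm
          · refine le_inf ?_ (Submodule.span_mono (by exact_mod_cast Finset.erase_subset v S))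
            rw [Submodule.span_le]
            intro s hs
            exact herTl s (by exact_mod_cast hs)
          · rintro x hx
            obtain ⟨hxTl, hxS⟩ := Submodule.mem_inf.1 hx
            have hSeq : (S : Set (V n)) = insert v ((S.erase v : Finset (V n)) : Set (V n)) := by
              rw [← Finset.coe_insert, Finset.insert_erase hvS]
            rw [hSeq, Submodule.span_insert] at hxS
            obtain ⟨y, hy, z, hz, rfl⟩ := Submodule.mem_sup.1 hxS
            obtain ⟨c, rfl⟩ := Submodule.mem_span_singleton.1 hy
            have hzTl : z ∈ Tl := by
              refine Submodule.span_le.2 ?_ hz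
              intro s hs
              exact herTl s (by exact_mod_cast hs)
            have hcv : c • v ∈ Tl := by
              have h' : c • v = c • v + z - z := by abel
              rw [h']
              exact Submodule.sub_mem _ hxTl hzTl
            rcases eq_or_ne c 0 with rfl | hc0
            · rw [zero_smul, zero_add]; exact hz
            · exact absurd (by
                have h'' : v = c⁻¹ • (c • v) := by rw [smul_smul, inv_mul_cancel₀ hc0, one_smul]
                rw [h'']
                exact Submodule.smul_mem _ _ hcv) hvTl

lemma main_descend (B : Finset (V n)) (hB0 : ∀ v ∈ B, v ≠ 0)
    (T : ℕ → Submodule ℝ (V n)) (r : ℕ) (hmono : Monotone T)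
    (hpairT : ∀ j, j < r → ∀ v ∈ B, ∀ w ∈ B, v ∈ T (j+1) → v ∉ T j → w ∈ T (j+1) →
      w ∉ T j → w ∉ Submodule.span ℝ {v} →
      ∃ u ∈ B, u ∈ Submodule.span ℝ ({v, w} : Set (V n)) ⊓ T j)
    (hW : ∀ v ∈ B, v ∈ T r) :
    ∀ k i : ℕ, i = r - k → ∀ S : Finset (V n), S ⊆ B →
      ∃ S' : Finset (V n), S' ⊆ B ∧
        Submodule.span ℝ (S' : Set (V n)) = T i ⊓ Submodule.span ℝ (S : Set (V n)) := by
  intro k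
  induction k with
  | zero =>
    rintro i rfl S hSB
    refine ⟨S, hSB, ?_⟩
    refine (inf_eq_right.2 ?_).symm
    rw [Submodule.span_le]
    intro s hs
    exact hW s (hSB (by exact_mod_cast hs))
  | succ k IH =>
    rintro i rfl S hSB
    by_cases hk : r ≤ k
    · have h0 : r - (k + 1) = r - k := by omega
      rw [h0]
      exact IH (r - k) rfl S hSB
    · push_neg at hk
      have hik : (r - (k + 1)) + 1 = r - k := by omega
      obtain ⟨S₁, hS₁B, hS₁⟩ := IH (r - k) rfl S hSB
      have hS₁Th : ∀ s ∈ S₁, s ∈ T ((r - (k + 1)) + 1) := by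
        intro s hs
        rw [hik]
        have hss : s ∈ Submodule.span ℝ (S₁ : Set (V n)) :=
          Submodule.subset_span (by exact_mod_cast hs)
        rw [hS₁] at hss
        exact (Submodule.mem_inf.1 hss).1
      obtain ⟨S', hS'B, hS'⟩ := coatom_step B hB0 (T (r - (k + 1))) (T ((r - (k + 1)) + 1))
        (hpairT _ (by omega)) ((S₁.filter (fun s => s ∉ T (r - (k + 1)))).card) S₁ hS₁B hS₁Th
        le_rfl
      refine ⟨S', hS'B, ?_⟩
      rw [hS', hS₁, ← inf_assoc, inf_eq_left.2 (hmono (show r - (k+1) ≤ r - k by omega))]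

end Aux3


section Aux4
open Submodule Module

variable {n : ℕ}

noncomputable def pick (Tl : Submodule ℝ (V n)) (v w : V n) : V n :=
  if h : ∃ u : V n, u ≠ 0 ∧ u ∈ Submodule.span ℝ ({v, w} : Set (V n)) ⊓ Tl then h.choose else v

noncomputable def stepF (Tl : Submodule ℝ (V n)) (C : Finset (V n)) : Finset (V n) :=
  C ∪ (C ×ˢ C).image (fun p => pick Tl p.1 p.2)

noncomputable def EF (T : ℕ → Submodule ℝ (V n)) (r : ℕ) (init : Finset (V n)) :
    ℕ → Finset (V n)
  | 0 => init
  | (k+1) => stepF (T (r - (k+1))) (EF T r init k)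

lemma EF_le (T : ℕ → Submodule ℝ (V n)) (r : ℕ) (init : Finset (V n)) :
    ∀ {k m : ℕ}, k ≤ m → EF T r init k ⊆ EF T r init m := by
  intro k m h
  induction m with
  | zero => rw [Nat.le_zero.1 h]
  | succ m IH =>
    rcases Nat.lt_or_ge k (m+1) with h' | h'
    · exact (IH (by omega)).trans Finset.subset_union_left
    · rw [Nat.le_antisymm h h']

lemma EF_new {T : ℕ → Submodule ℝ (V n)} {r : ℕ} {init : Finset (V n)} {k : ℕ} {x : V n}
    (hx : x ∈ EF T r init (k+1)) : x ∈ EF T r init k ∨ x ∈ T (r - (k+1)) := by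
  rcases Finset.mem_union.1 hx with h | h
  · exact Or.inl h
  · obtain ⟨p, hp, rfl⟩ := Finset.mem_image.1 h
    rw [pick]
    split_ifs with hex
    · exact Or.inr (Submodule.mem_inf.1 hex.choose_spec.2).2
    · exact Or.inl (Finset.mem_product.1 hp).1

lemma EF_inv {T : ℕ → Submodule ℝ (V n)} {r : ℕ} {init : Finset (V n)}
    (hTle : ∀ j, T j ≤ T r) (hinit : ∀ v ∈ init, v ≠ 0 ∧ v ∈ T r) :
    ∀ k, ∀ v ∈ EF T r init k, v ≠ 0 ∧ v ∈ T r := by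
  intro k
  induction k with
  | zero => exact hinit
  | succ k IH =>
    intro v hv
    rcases Finset.mem_union.1 hv with h | h
    · exact IH v h
    · obtain ⟨p, hp, rfl⟩ := Finset.mem_image.1 h
      rw [pick]
      split_ifs with hex
      · obtain ⟨h0, hmem⟩ := hex.choose_spec
        exact ⟨h0, hTle _ (Submodule.mem_inf.1 hmem).2⟩
      · exact IH p.1 (Finset.mem_product.1 hp).1

lemma EF_descend {T : ℕ → Submodule ℝ (V n)} {r : ℕ} {init : Finset (V n)}
    (hmono : Monotone T) :
    ∀ m, ∀ x ∈ EF T r init m, ∀ j, x ∉ T j → x ∈ EF T r init (r - j - 1) := by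
  intro m
  induction m with
  | zero => exact fun x hx j _ => EF_le T r init (Nat.zero_le _) hx
  | succ m IH =>
    intro x hx j hxT
    rcases EF_new hx with h | h
    · exact IH x h j hxT
    · by_cases hle : r - (m+1) ≤ j
      · exact absurd (hmono hle h) hxT
      · exact EF_le T r init (by omega) hx

lemma EF_pair {T : ℕ → Submodule ℝ (V n)} {r : ℕ} {init : Finset (V n)}
    (hmono : Monotone T)
    (hfr : ∀ j, j < r → Module.finrank ℝ (T (j+1)) ≤ Module.finrank ℝ (T j) + 1) :
    ∀ j, j < r → ∀ v ∈ EF T r init r, ∀ w ∈ EF T r init r, v ∈ T (j+1) → v ∉ T j →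
      w ∈ T (j+1) → w ∉ T j → w ∉ Submodule.span ℝ {v} →
      ∃ u ∈ EF T r init r, u ∈ Submodule.span ℝ ({v, w} : Set (V n)) ⊓ T j := by
  intro j hj v hv w hw hv1 hv0 hw1 hw0 hwv
  have hvne : v ≠ 0 := fun h => hv0 (h ▸ (T j).zero_mem)
  have hex : ∃ u : V n, u ≠ 0 ∧ u ∈ Submodule.span ℝ ({v, w} : Set (V n)) ⊓ T j :=
    span_pair_inter_ne_bot (hmono (Nat.le_succ j)) (hfr j hj) hv1 hw1 hvne hwv
  have hvE : v ∈ EF T r init (r - j - 1) := EF_descend hmono r v hv j hv0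
  have hwE : w ∈ EF T r init (r - j - 1) := EF_descend hmono r w hw j hw0
  have hkey : r - ((r - j - 1) + 1) = j := by omega
  have hmem : pick (T j) v w ∈ EF T r init ((r - j - 1) + 1) := by
    show pick (T j) v w ∈ stepF (T (r - ((r - j - 1) + 1))) (EF T r init (r - j - 1))
    rw [hkey]
    refine Finset.mem_union_right _ ?_
    exact Finset.mem_image.2 ⟨(v, w), Finset.mem_product.2 ⟨hvE, hwE⟩, rfl⟩
  rw [show pick (T j) v w = hex.choose from dif_pos hex] at hmem
  refine ⟨hex.choose, ?_, hex.choose_spec.2⟩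
  exact EF_le T r init (by omega) hmem

lemma span_image_rep (A : Finset (V n)) (S : Finset (V n)) (hS0 : ∀ s ∈ S, s ≠ 0) :
    Submodule.span ℝ ((S.image (rep A) : Finset (V n)) : Set (V n))
      = Submodule.span ℝ (S : Set (V n)) := by
  apply le_antisymm
  · rw [Submodule.span_le]
    intro x hx
    obtain ⟨s, hs, rfl⟩ := Finset.mem_image.1 (show x ∈ S.image (rep A) by exact_mod_cast hx)
    obtain ⟨c, _, hc⟩ := rep_smul A (hS0 s hs)
    rw [hc]
    exact Submodule.smul_mem _ _ (Submodule.subset_span (by exact_mod_cast hs))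
  · rw [Submodule.span_le]
    intro s hs
    have hsS : s ∈ S := by exact_mod_cast hs
    obtain ⟨c, hc0, hc⟩ := rep_smul A (hS0 s hsS)
    have : s = c⁻¹ • rep A s := by rw [hc, smul_smul, inv_mul_cancel₀ hc0, one_smul]
    rw [this]
    refine Submodule.smul_mem _ _ (Submodule.subset_span ?_)
    exact_mod_cast Finset.mem_image_of_mem (rep A) hsS

end Aux4

theorem exists_supersolvable_extension {n : ℕ} (A : Finset (V n)) (hA : IsArrangement A) :
    ∃ B : Finset (V n), IsArrangement B ∧ A ⊆ B ∧ IsSupersolvable B ∧ rankA B = rankA A := by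
  classical
  set W : Submodule ℝ (V n) := Submodule.span ℝ (A : Set (V n)) with hWdef
  set r : ℕ := Module.finrank ℝ W with hrdef
  have hrA : rankA A = r := rfl
  let bW : Module.Basis (Fin r) ℝ W := Module.finBasis ℝ W
  set bset : ℕ → Finset (V n) := fun i =>
    Finset.image (fun k : Fin r => ((bW k : W) : V n))
      (Finset.univ.filter (fun k : Fin r => (k : ℕ) < i)) with hbset
  set T : ℕ → Submodule ℝ (V n) :=
    fun i => Submodule.span ℝ ((bset i : Finset (V n)) : Set (V n)) with hTdef
  have hbmono : ∀ i j : ℕ, i ≤ j → bset i ⊆ bset j := by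
    intro i j hij
    apply Finset.image_subset_image
    intro k hk
    exact Finset.mem_filter.2 ⟨Finset.mem_univ _, lt_of_lt_of_le (Finset.mem_filter.1 hk).2 hij⟩
  have hbsub : ∀ i, bset i ⊆ bset r := by
    intro i
    apply Finset.image_subset_image
    intro k _
    exact Finset.mem_filter.2 ⟨Finset.mem_univ _, k.isLt⟩
  have hTmono : Monotone T := fun i j hij => Submodule.span_mono (by exact_mod_cast hbmono i j hij)
  have hTW : ∀ i, T i ≤ T r := fun i => Submodule.span_mono (by exact_mod_cast hbsub i)
  have hb0 : ∀ i, ∀ v ∈ bset i, v ≠ 0 := by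
    intro i v hv
    obtain ⟨k, _, rfl⟩ := Finset.mem_image.1 hv
    simpa [Submodule.coe_eq_zero] using bW.ne_zero k
  have hTr : T r = W := by
    have hcoe : ((bset r : Finset (V n)) : Set (V n)) = (W.subtype) '' (Set.range bW) := by
      ext x
      constructor
      · intro hx
        obtain ⟨k, _, rfl⟩ := Finset.mem_image.1 (show x ∈ bset r by exact_mod_cast hx)
        exact ⟨bW k, ⟨k, rfl⟩, rfl⟩
      · rintro ⟨y, ⟨k, rfl⟩, rfl⟩
        exact_mod_cast Finset.mem_image_of_mem _ (Finset.mem_filter.2 ⟨Finset.mem_univ k, k.isLt⟩)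
    rw [show T r = Submodule.span ℝ ((bset r : Finset (V n)) : Set (V n)) from rfl, hcoe,
      ← Submodule.map_span, bW.span_eq, Submodule.map_top, Submodule.range_subtype]
  have hindfull : LinearIndependent ℝ (fun k : Fin r => ((bW k : W) : V n)) :=
    bW.linearIndependent.map' W.subtype (Submodule.ker_subtype W)
  have hTi : ∀ i : ℕ, i ≤ r → Module.finrank ℝ (T i) = i := by
    intro i hi
    have hcoe : ((bset i : Finset (V n)) : Set (V n))
        = Set.range (fun k : Fin i => ((bW (Fin.castLE hi k) : W) : V n)) := by
      ext x
      constructor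
      · intro hx
        obtain ⟨k, hk, rfl⟩ := Finset.mem_image.1 (show x ∈ bset i by exact_mod_cast hx)
        have hki : (k : ℕ) < i := (Finset.mem_filter.1 hk).2
        exact ⟨⟨(k : ℕ), hki⟩, by congr 1⟩
      · rintro ⟨k, rfl⟩
        have : Fin.castLE hi k ∈ Finset.univ.filter (fun k : Fin r => (k : ℕ) < i) :=
          Finset.mem_filter.2 ⟨Finset.mem_univ _, k.isLt⟩
        exact_mod_cast Finset.mem_image_of_mem _ this
    have hind : LinearIndependent ℝ (fun k : Fin i => ((bW (Fin.castLE hi k) : W) : V n)) :=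
      hindfull.comp (Fin.castLE hi) (Fin.castLE_injective hi)
    rw [show T i = Submodule.span ℝ ((bset i : Finset (V n)) : Set (V n)) from rfl, hcoe,
      finrank_span_eq_card hind, Fintype.card_fin]
  have hfr : ∀ j, j < r → Module.finrank ℝ (T (j+1)) ≤ Module.finrank ℝ (T j) + 1 := by
    intro j hj
    rw [hTi j (by omega), hTi (j+1) (by omega)]
  set init : Finset (V n) := A ∪ bset r with hinitdef
  have hinit : ∀ v ∈ init, v ≠ 0 ∧ v ∈ T r := by
    intro v hv
    rcases Finset.mem_union.1 hv with h | h
    · exact ⟨hA.1 v h, hTr ▸ Submodule.subset_span (by exact_mod_cast h)⟩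
    · exact ⟨hb0 r v h, Submodule.subset_span (by exact_mod_cast h)⟩
  set B' : Finset (V n) := EF T r init r with hB'def
  have hB'inv : ∀ v ∈ B', v ≠ 0 ∧ v ∈ T r := EF_inv hTW hinit r
  have hB'0 : ∀ v ∈ B', v ≠ 0 := fun v hv => (hB'inv v hv).1
  have hinitB' : init ⊆ B' := EF_le T r init (Nat.zero_le r)
  have hpairB' := EF_pair (init := init) hTmono hfr
  set B : Finset (V n) := B'.image (rep A) with hBdef
  have hB0 : ∀ x ∈ B, x ≠ 0 := by
    intro x hx
    obtain ⟨v, hv, rfl⟩ := Finset.mem_image.1 hx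
    obtain ⟨c, hc0, hc⟩ := rep_smul A (hB'0 v hv)
    rw [hc]
    exact smul_ne_zero hc0 (hB'0 v hv)
  have hBW : ∀ x ∈ B, x ∈ T r := by
    intro x hx
    obtain ⟨v, hv, rfl⟩ := Finset.mem_image.1 hx
    obtain ⟨c, hc0, hc⟩ := rep_smul A (hB'0 v hv)
    rw [hc]
    exact Submodule.smul_mem _ _ (hB'inv v hv).2
  have harr : IsArrangement B := by
    refine ⟨hB0, ?_⟩
    intro u hu w hw hsh
    obtain ⟨v, hv, rfl⟩ := Finset.mem_image.1 hu
    obtain ⟨v', hv', rfl⟩ := Finset.mem_image.1 hw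
    exact rep_eq_of_sameHyp hA (hB'0 v hv)
      (sameHyp_trans (sameHyp_rep A (hB'0 v hv))
        (sameHyp_trans hsh (sameHyp_symm (sameHyp_rep A (hB'0 v' hv')))))
  have hAB : A ⊆ B := by
    intro a ha
    rw [← rep_mem_A hA ha]
    exact Finset.mem_image_of_mem _ (hinitB' (Finset.mem_union_left _ ha))
  have hspanB : Submodule.span ℝ (B : Set (V n)) = W := by
    apply le_antisymm
    · rw [Submodule.span_le]
      intro x hx
      rw [← hTr]
      exact hBW x (by exact_mod_cast hx)
    · rw [← hTr]
      rw [show T r = Submodule.span ℝ ((bset r : Finset (V n)) : Set (V n)) from rfl,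
        ← span_image_rep A (bset r) (hb0 r)]
      apply Submodule.span_mono
      have hsub : (bset r).image (rep A) ⊆ B :=
        Finset.image_subset_image ((Finset.subset_union_right).trans hinitB')
      exact_mod_cast hsub
  have hrB : rankA B = r := by
    show Module.finrank ℝ (Submodule.span ℝ (B : Set (V n))) = r
    rw [hspanB]
  have hpairB : ∀ j, j < r → ∀ v ∈ B, ∀ w ∈ B, v ∈ T (j+1) → v ∉ T j → w ∈ T (j+1) →
      w ∉ T j → w ∉ Submodule.span ℝ {v} →
      ∃ u ∈ B, u ∈ Submodule.span ℝ ({v, w} : Set (V n)) ⊓ T j := by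
    intro j hj v hv w hw hv1 hv0 hw1 hw0 hwv
    obtain ⟨v₀, hv₀, rfl⟩ := Finset.mem_image.1 hv
    obtain ⟨w₀, hw₀, rfl⟩ := Finset.mem_image.1 hw
    obtain ⟨c, hc0, hc⟩ := rep_smul A (hB'0 v₀ hv₀)
    obtain ⟨d, hd0, hd⟩ := rep_smul A (hB'0 w₀ hw₀)
    have hv₀eq : v₀ = c⁻¹ • rep A v₀ := by rw [hc, smul_smul, inv_mul_cancel₀ hc0, one_smul]
    have hw₀eq : w₀ = d⁻¹ • rep A w₀ := by rw [hd, smul_smul, inv_mul_cancel₀ hd0, one_smul]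
    have hv₀1 : v₀ ∈ T (j+1) := by rw [hv₀eq]; exact Submodule.smul_mem _ _ hv1
    have hw₀1 : w₀ ∈ T (j+1) := by rw [hw₀eq]; exact Submodule.smul_mem _ _ hw1
    have hv₀0 : v₀ ∉ T j := fun h => hv0 (by rw [hc]; exact Submodule.smul_mem _ _ h)
    have hw₀0 : w₀ ∉ T j := fun h => hw0 (by rw [hd]; exact Submodule.smul_mem _ _ h)
    have hsv : Submodule.span ℝ ({rep A v₀} : Set (V n)) = Submodule.span ℝ {v₀} := by
      rw [hc]; exact span_singleton_smul hc0
    have hw₀v : w₀ ∉ Submodule.span ℝ {v₀} := by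
      intro h
      exact hwv (by rw [hsv, hd]; exact Submodule.smul_mem _ _ h)
    obtain ⟨u, huB', hu⟩ := hpairB' j hj v₀ hv₀ w₀ hw₀ hv₀1 hv₀0 hw₀1 hw₀0 hw₀v
    obtain ⟨e, he0, heq⟩ := rep_smul A (hB'0 u huB')
    refine ⟨rep A u, Finset.mem_image_of_mem _ huB', ?_⟩
    rw [heq, span_pair_smul hc0 hd0 hc hd]
    exact Submodule.smul_mem _ _ hu
  have hmain : ∀ i : ℕ, i ≤ r → ∀ S : Finset (V n), S ⊆ B →
      ∃ S' : Finset (V n), S' ⊆ B ∧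
        Submodule.span ℝ (S' : Set (V n)) = T i ⊓ Submodule.span ℝ (S : Set (V n)) := by
    intro i hi S hS
    exact main_descend B hB0 T r hTmono hpairB hBW (r - i) i (by omega) S hS
  have hP1 : ∀ i : ℕ, i ≤ r → ∃ S : Finset (V n), S ⊆ B ∧
      Submodule.span ℝ (S : Set (V n)) = T i := by
    intro i hi
    refine ⟨(bset i).image (rep A), ?_, ?_⟩
    · exact Finset.image_subset_image ((hbsub i).trans
        ((Finset.subset_union_right).trans hinitB'))
    · rw [span_image_rep A (bset i) (hb0 i)]
  have hT0 : T 0 = ⊥ := by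
    have hb : bset 0 = ∅ := by
      rw [hbset]
      simp
    rw [show T 0 = Submodule.span ℝ ((bset 0 : Finset (V n)) : Set (V n)) from rfl, hb]
    simp
  refine ⟨B, harr, hAB, ⟨fun i => KK (T (i : ℕ)), ?_, ?_, ?_, ?_⟩, by rw [hrB, hrA]⟩
  · show KK (T ((0 : Fin (rankA B + 1)) : ℕ)) = ⊤
    rw [show ((0 : Fin (rankA B + 1)) : ℕ) = 0 from rfl, hT0, KK_bot]
  · intro i
    have hi : (i : ℕ) ≤ r := by
      have h := i.isLt
      omega
    obtain ⟨Si, hSiB, hSi⟩ := hP1 i hi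
    constructor
    · exact ⟨Si, hSiB, by rw [inf_ker_KK, hSi]⟩
    · rintro Y ⟨Ts, hTs, rfl⟩
      rw [inf_ker_KK, KK_sup]
      obtain ⟨S', hS'B, hS'⟩ := hmain i hi Ts hTs
      exact ⟨S', hS'B, by rw [inf_ker_KK, hS']⟩
  · intro i j hij
    exact KK_antitone (hTmono (show (i : ℕ) ≤ (j : ℕ) from hij))
  · intro i
    have hi : (i : ℕ) ≤ r := by
      have h := i.isLt
      omega
    rw [finrank_KK, hTi (i : ℕ) hi]
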